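/- Let (c_1,...,c_r) be natural numbers with c = max_i c_i, Z_1,...,Z_r independent Bernoulli(p), S_j = Σ_{i≤j} c_i Z_i, μ_j = E[S_j], μ = μ_r. Then for all u ≥ 0, P(max_{1≤j≤r}(μ_j − S_j) ≥ u) ≤ exp(−u²/(2cμ)). -/

import Mathlib

open MeasureTheory Finset Real

private lemma exp_neg_le_quad {s : ℝ} (hs : 0 ≤ s) :
    Real.exp (-s) ≤ 1 - s + s ^ 2 / 2 := by
  have h1 : 1 + s + s ^ 2 / 2 ≤ Real.exp s := Real.quadratic_le_exp_of_nonneg hs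
  have h2 : Real.exp (-s) = 1 / Real.exp s := by rw [Real.exp_neg]; ring
  have hpos : (0:ℝ) < 1 + s + s ^ 2 / 2 := by nlinarith
  have h3 : Real.exp (-s) ≤ 1 / (1 + s + s ^ 2 / 2) := by
    rw [h2]
    exact one_div_le_one_div_of_le hpos h1
  refine h3.trans ?_
  rw [div_le_iff₀ hpos]
  nlinarith [sq_nonneg s, sq_nonneg (s^2)]

private lemma bern_mgf_bound {p s : ℝ} (hp0 : 0 ≤ p) (hp1 : p ≤ 1) (hs : 0 ≤ s) :
    p * Real.exp (p * s - s) + (1 - p) * Real.exp (p * s) ≤ Real.exp (p * s ^ 2 / 2) := by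
  have key : p * Real.exp (-s) + (1 - p) ≤ Real.exp (-(p * s) + p * s ^ 2 / 2) := by
    have h1 : p * Real.exp (-s) + (1 - p) ≤ 1 + (-(p*s) + p * s^2/2) := by
      have := exp_neg_le_quad hs
      nlinarith
    refine h1.trans ?_
    have := Real.add_one_le_exp (-(p*s) + p * s^2/2)
    linarith
  have e1 : Real.exp (p * s - s) = Real.exp (p * s) * Real.exp (-s) := by
    rw [← Real.exp_add]; ring_nf
  calc p * Real.exp (p * s - s) + (1 - p) * Real.exp (p * s)
      = Real.exp (p * s) * (p * Real.exp (-s) + (1 - p)) := by rw [e1]; ring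
    _ ≤ Real.exp (p * s) * Real.exp (-(p * s) + p * s ^ 2 / 2) :=
        mul_le_mul_of_nonneg_left key (Real.exp_nonneg _)
    _ = Real.exp (p * s ^ 2 / 2) := by rw [← Real.exp_add]; ring_nf

private lemma bern_mgf_ge_one {p a b : ℝ} (hp0 : 0 ≤ p) (hp1 : p ≤ 1)
    (h : p * a + (1 - p) * b = 0) : 1 ≤ p * Real.exp a + (1 - p) * Real.exp b := by
  have := convexOn_exp.2 (Set.mem_univ a) (Set.mem_univ b) hp0 (by linarith : (0:ℝ) ≤ 1 - p)
    (by ring)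
  simp only [smul_eq_mul] at this
  rw [h] at this
  simpa using this

private lemma indepFun_of_blocks {Ω : Type*} [m0 : MeasurableSpace Ω] {P : Measure Ω}
    {r : ℕ} {Z : Fin r → Ω → ℝ} (hmeas : ∀ i, Measurable (Z i))
    (hindep : ProbabilityTheory.iIndepFun Z P)
    {S T : Set (Fin r)} (hST : Disjoint S T) {F G : Ω → ℝ}
    (hF : Measurable[⨆ i ∈ S, MeasurableSpace.comap (Z i) inferInstance] F)
    (hG : Measurable[⨆ i ∈ T, MeasurableSpace.comap (Z i) inferInstance] G) :
    ProbabilityTheory.IndepFun F G P := by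
  have h := ProbabilityTheory.indep_iSup_of_disjoint
    (fun i => (hmeas i).comap_le) hindep.iIndep hST
  exact ProbabilityTheory.indep_of_indep_of_le_right
    (ProbabilityTheory.indep_of_indep_of_le_left h hF.comap_le) hG.comap_le

set_option maxHeartbeats 4000000 in
theorem weighted_chernoff_lower {Ω : Type*} [MeasurableSpace Ω]
    (P : Measure Ω) [IsProbabilityMeasure P]
    (r : ℕ) (hr : 0 < r) (c : Fin r → ℕ) (hc : ∀ i, 0 < c i)
    (cmax : ℕ) (hcmax : cmax = Finset.univ.sup c)
    (p : ℝ) (hp0 : 0 ≤ p) (hp1 : p ≤ 1)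
    (Z : Fin r → Ω → ℝ) (hmeas : ∀ i, Measurable (Z i))
    (hindep : ProbabilityTheory.iIndepFun Z P)
    (hbern : ∀ i, P {ω | Z i ω = 1} = ENNReal.ofReal p ∧
                  P {ω | Z i ω = 0} = ENNReal.ofReal (1 - p))
    (u : ℝ) (hu : 0 ≤ u) :
    P {ω | ∃ j : Fin r,
        u ≤ p * (∑ i ∈ Finset.univ.filter (· ≤ j), (c i : ℝ))
              - (∑ i ∈ Finset.univ.filter (· ≤ j), (c i : ℝ) * Z i ω)}
      ≤ ENNReal.ofReal
          (Real.exp (-(u ^ 2) /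
            (2 * cmax * (p * (∑ i : Fin r, (c i : ℝ)))))) := by
  classical
  by_cases hdenom : (2 * (cmax:ℝ) * (p * (∑ i : Fin r, (c i : ℝ)))) = 0
  · rw [hdenom, div_zero, Real.exp_zero, ENNReal.ofReal_one]
    exact prob_le_one
  -- notation
  set w : Fin r → ℝ := fun i => (c i : ℝ) with hw
  set X : Fin r → Ω → ℝ := fun i ω => p * w i - w i * Z i ω with hXdef
  set T : Fin r → Ω → ℝ := fun j ω => ∑ i ∈ univ.filter (· ≤ j), X i ω with hTdef
  have hwpos : ∀ i, 0 < w i := fun i => Nat.cast_pos.mpr (hc i)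
  have hwle : ∀ i, w i ≤ (cmax:ℝ) := fun i => by
    exact_mod_cast Nat.cast_le.mpr (hcmax ▸ Finset.le_sup (mem_univ i))
  set μtot : ℝ := p * ∑ i, w i with hμtot
  set K : ℝ := (cmax:ℝ) * μtot with hK
  have hμnonneg : 0 ≤ μtot := by
    apply mul_nonneg hp0
    exact Finset.sum_nonneg fun i _ => (hwpos i).le
  have hKpos : 0 < K := by
    rcases lt_or_eq_of_le (mul_nonneg (Nat.cast_nonneg cmax) hμnonneg) with h | h
    · exact h
    · exact absurd (by rw [hμtot] at h; nlinarith [h.symm] : (2 * (cmax:ℝ) * (p * (∑ i : Fin r, (c i : ℝ)))) = 0) hdenom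
  set L : ℝ := u / K with hL
  have hL0 : 0 ≤ L := div_nonneg hu hKpos.le
  -- measurability
  have hXmeas : ∀ i, Measurable (X i) := fun i =>
    (measurable_const.sub ((hmeas i).const_mul (w i)))
  have hTmeas : ∀ j, Measurable (T j) := fun j =>
    Finset.measurable_sum _ fun i _ => hXmeas i
  -- a.e. the Z's are 0/1 valued
  have hs1meas : ∀ i, MeasurableSet {ω | Z i ω = 1} := fun i =>
    (hmeas i) (measurableSet_singleton 1)
  have hs0meas : ∀ i, MeasurableSet {ω | Z i ω = 0} := fun i =>
    (hmeas i) (measurableSet_singleton 0)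
  have hunion1 : ∀ i, P ({ω | Z i ω = 1} ∪ {ω | Z i ω = 0}) = 1 := by
    intro i
    rw [measure_union (by
      rw [Set.disjoint_left]
      intro ω h1 h0
      simp only [Set.mem_setOf_eq] at h1 h0
      rw [h1] at h0; norm_num at h0) (hs0meas i), (hbern i).1, (hbern i).2,
      ← ENNReal.ofReal_add hp0 (by linarith)]
    norm_num
  have hcompl0 : ∀ i, P ({ω | Z i ω = 1} ∪ {ω | Z i ω = 0})ᶜ = 0 := by
    intro i
    rw [measure_compl ((hs1meas i).union (hs0meas i)) (measure_ne_top _ _), hunion1 i,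
      measure_univ, tsub_self]
  have hae : ∀ᵐ ω ∂P, ∀ i, Z i ω = 1 ∨ Z i ω = 0 := by
    rw [ae_all_iff]
    intro i
    refine measure_mono_null ?_ (hcompl0 i)
    intro ω hω
    simpa using hω
  -- the exp-product functions
  set g : Finset (Fin r) → Ω → ℝ := fun s ω => ∏ i ∈ s, Real.exp (L * X i ω) with hg
  have hgnonneg : ∀ s ω, 0 ≤ g s ω := fun s ω =>
    Finset.prod_nonneg fun i _ => (Real.exp_nonneg _)
  have hgmeas : ∀ s, Measurable (g s) := fun s =>
    Finset.measurable_prod _ fun i _ => (Real.measurable_exp.comp ((hXmeas i).const_mul L))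
  have hgbdd : ∀ s : Finset (Fin r), ∀ᵐ ω ∂P, g s ω ≤ ∏ i ∈ s, Real.exp (L * (p * w i)) := by
    intro s
    filter_upwards [hae] with ω hω
    refine Finset.prod_le_prod (fun i _ => Real.exp_nonneg _) fun i _ => ?_
    refine Real.exp_le_exp.mpr (mul_le_mul_of_nonneg_left ?_ hL0)
    have hZ : 0 ≤ Z i ω := by rcases hω i with h | h <;> rw [h] <;> norm_num
    have := mul_nonneg (hwpos i).le hZ
    simp only [hXdef]
    linarith
  have hgint : ∀ s : Finset (Fin r), Integrable (g s) P := by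
    intro s
    refine Integrable.mono' (integrable_const (∏ i ∈ s, Real.exp (L * (p * w i))))
      (hgmeas s).aestronglyMeasurable ?_
    filter_upwards [hgbdd s] with ω hb
    rwa [Real.norm_of_nonneg (hgnonneg s ω)]
  -- block measurability
  have hexpXm : ∀ (S : Set (Fin r)), ∀ i ∈ S,
      Measurable[⨆ k ∈ S, MeasurableSpace.comap (Z k) inferInstance]
        (fun ω => Real.exp (L * X i ω)) := by
    intro S i hi
    have hZ : Measurable[⨆ k ∈ S, MeasurableSpace.comap (Z k) inferInstance] (Z i) :=
      Measurable.of_comap_le (le_biSup (fun k => MeasurableSpace.comap (Z k) inferInstance) hi)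
    exact Real.measurable_exp.comp ((measurable_const.sub (hZ.const_mul (w i))).const_mul L)
  have hgm : ∀ (S : Set (Fin r)) (s : Finset (Fin r)), ↑s ⊆ S →
      Measurable[⨆ k ∈ S, MeasurableSpace.comap (Z k) inferInstance] (g s) := by
    intro S s hsub
    exact Finset.measurable_prod _ fun i hi => hexpXm S i (hsub hi)
  -- product formula
  have hprod : ∀ s : Finset (Fin r),
      ∫ ω, g s ω ∂P = ∏ i ∈ s, ∫ ω, Real.exp (L * X i ω) ∂P := by
    intro s
    induction s using Finset.induction_on with
    | empty => simp [hg]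
    | insert _ _ ha _ =>
      rename_i a s ih
      have hsplit : g (insert a s) = (fun ω => Real.exp (L * X a ω)) * g s :=
        funext fun ω => Finset.prod_insert ha
      have hind : ProbabilityTheory.IndepFun (fun ω => Real.exp (L * X a ω)) (g s) P := by
        refine indepFun_of_blocks hmeas hindep (S := {a}) (T := ↑s)
          (Set.disjoint_singleton_left.mpr (by exact_mod_cast ha)) ?_ ?_
        · exact hexpXm {a} a rfl
        · exact hgm ↑s s le_rfl
      rw [hsplit, hind.integral_mul_eq_mul_integral
        (Real.measurable_exp.comp ((hXmeas a).const_mul L)).aestronglyMeasurable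
        (hgmeas s).aestronglyMeasurable, Finset.prod_insert ha, ih]
  -- value of the individual MGF
  have hIexp : ∀ i, ∫ ω, Real.exp (L * X i ω) ∂P
      = p * Real.exp (L * (p * w i - w i)) + (1 - p) * Real.exp (L * (p * w i)) := by
    intro i
    have hfint : Integrable (fun ω => Real.exp (L * X i ω)) P := by
      have := hgint {i}
      simpa [hg] using this
    have h1 : ∫ ω in {ω | Z i ω = 1}, Real.exp (L * X i ω) ∂P
        = p * Real.exp (L * (p * w i - w i)) := by
      rw [setIntegral_congr_fun (hs1meas i)
        (fun ω hω => by
          show Real.exp (L * X i ω) = Real.exp (L * (p * w i - w i))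
          have : Z i ω = 1 := hω
          simp only [hXdef, this, mul_one]),
        setIntegral_const, measureReal_def, (hbern i).1, ENNReal.toReal_ofReal hp0, smul_eq_mul]
    have h0 : ∫ ω in {ω | Z i ω = 0}, Real.exp (L * X i ω) ∂P
        = (1 - p) * Real.exp (L * (p * w i)) := by
      rw [setIntegral_congr_fun (hs0meas i)
        (fun ω hω => by
          show Real.exp (L * X i ω) = Real.exp (L * (p * w i))
          have : Z i ω = 0 := hω
          simp only [hXdef, this, mul_zero, sub_zero]),
        setIntegral_const, measureReal_def, (hbern i).2, ENNReal.toReal_ofReal (by linarith), smul_eq_mul]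
    have hdisj : Disjoint {ω | Z i ω = 1} {ω | Z i ω = 0} := by
      rw [Set.disjoint_left]
      intro ω ha hb
      simp only [Set.mem_setOf_eq] at ha hb
      rw [ha] at hb; norm_num at hb
    rw [← integral_add_compl ((hs1meas i).union (hs0meas i)) hfint,
      setIntegral_measure_zero _ (hcompl0 i), add_zero,
      setIntegral_union hdisj (hs0meas i) hfint.integrableOn hfint.integrableOn, h1, h0]
  have hIexp_ge : ∀ i, 1 ≤ ∫ ω, Real.exp (L * X i ω) ∂P := by
    intro i
    rw [hIexp i]
    exact bern_mgf_ge_one hp0 hp1 (by ring)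
  have hIexp_le : ∀ i, ∫ ω, Real.exp (L * X i ω) ∂P ≤ Real.exp (p * (L * w i) ^ 2 / 2) := by
    intro i
    rw [hIexp i, show L * (p * w i - w i) = p * (L * w i) - (L * w i) by ring,
      show L * (p * w i) = p * (L * w i) by ring]
    exact bern_mgf_bound hp0 hp1 (mul_nonneg hL0 (hwpos i).le)
  -- events
  set A : Set Ω := {ω | ∃ j, u ≤ T j ω} with hA
  set B : Fin r → Set Ω := fun j => {ω | u ≤ T j ω ∧ ∀ k, k < j → T k ω < u} with hB
  have hBeq : ∀ j, B j = {ω | u ≤ T j ω} ∩ ⋂ k, ⋂ (_ : k < j), {ω | T k ω < u} := by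
    intro j
    ext ω
    simp [hB]
  have hBmeas : ∀ j, MeasurableSet (B j) := by
    intro j
    rw [hBeq]
    exact (measurableSet_le measurable_const (hTmeas j)).inter
      (MeasurableSet.iInter fun k => MeasurableSet.iInter fun _ =>
        measurableSet_lt (hTmeas k) measurable_const)
  have hTmS : ∀ j k, k ≤ j →
      Measurable[⨆ i ∈ {i : Fin r | i ≤ j}, MeasurableSpace.comap (Z i) inferInstance] (T k) := by
    intro j k hkj
    refine Finset.measurable_sum _ fun i hi => ?_
    have hij : i ∈ {i : Fin r | i ≤ j} := le_trans (mem_filter.mp hi).2 hkj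
    have hZ : Measurable[⨆ i ∈ {i : Fin r | i ≤ j},
        MeasurableSpace.comap (Z i) inferInstance] (Z i) :=
      Measurable.of_comap_le (le_biSup (fun k => MeasurableSpace.comap (Z k) inferInstance) hij)
    exact measurable_const.sub (hZ.const_mul (w i))
  have hBmS : ∀ j, MeasurableSet[⨆ i ∈ {i : Fin r | i ≤ j},
      MeasurableSpace.comap (Z i) inferInstance] (B j) := by
    intro j
    rw [hBeq]
    exact MeasurableSet.inter (measurableSet_le measurable_const (hTmS j j le_rfl))
      (MeasurableSet.iInter fun k => MeasurableSet.iInter fun hk =>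
        measurableSet_lt (hTmS j k hk.le) measurable_const)
  -- disjointness and decomposition
  have hBdisj : ∀ ⦃j k : Fin r⦄, j < k → ∀ ω, ω ∈ B j → ω ∈ B k → False :=
    fun j k hjk ω hj hk => absurd hj.1 (not_le.mpr (hk.2 j hjk))
  have hBsubA : ∀ j, B j ⊆ A := fun j ω hω => ⟨j, hω.1⟩
  have hmin : ∀ ω, ω ∈ A → ∃ j, ω ∈ B j := by
    intro ω hω
    obtain ⟨j1, hj1⟩ := hω
    have hne : (univ.filter (fun j => u ≤ T j ω)).Nonempty :=
      ⟨j1, mem_filter.mpr ⟨mem_univ _, hj1⟩⟩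
    refine ⟨(univ.filter (fun j => u ≤ T j ω)).min' hne, ?_, ?_⟩
    · exact (mem_filter.mp ((univ.filter (fun j => u ≤ T j ω)).min'_mem hne)).2
    · intro k hk
      by_contra hc
      have hkmem : k ∈ univ.filter (fun j => u ≤ T j ω) :=
        mem_filter.mpr ⟨mem_univ _, not_lt.mp hc⟩
      exact absurd (Finset.min'_le (univ.filter (fun j => u ≤ T j ω)) k hkmem)
        (not_le.mpr hk)
  have hindsum : ∀ ω, (∑ j, Set.indicator (B j) (fun _ => (1:ℝ)) ω)
      = Set.indicator A (fun _ => (1:ℝ)) ω := by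
    intro ω
    by_cases hωA : ω ∈ A
    · obtain ⟨j0, hj0⟩ := hmin ω hωA
      rw [Finset.sum_eq_single_of_mem j0 (mem_univ _) ?_, Set.indicator_of_mem hj0,
        Set.indicator_of_mem hωA]
      intro b _ hbne
      rw [Set.indicator_of_notMem]
      intro hbB
      rcases lt_or_gt_of_ne hbne with h | h
      · exact hBdisj h ω hbB hj0
      · exact hBdisj h ω hj0 hbB
    · rw [Set.indicator_of_notMem hωA]
      exact Finset.sum_eq_zero fun j _ =>
        Set.indicator_of_notMem (fun hωB => hωA (hBsubA j hωB)) _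
  have hPA : P A = ∑ j, P (B j) := by
    have hU : A = ⋃ j ∈ (univ : Finset (Fin r)), B j := by
      ext ω
      simp only [Set.mem_iUnion, mem_univ, exists_prop, true_and]
      exact ⟨fun h => hmin ω h, fun ⟨j, hj⟩ => hBsubA j hj⟩
    rw [hU, measure_biUnion_finset ?_ (fun j _ => hBmeas j)]
    intro j _ k _ hjk
    rw [Function.onFun, Set.disjoint_left]
    intro ω hωj hωk
    rcases lt_or_gt_of_ne hjk with h | h
    · exact hBdisj h ω hωj hωk
    · exact hBdisj h ω hωk hωj
  -- per-index step
  set sge : Fin r → Finset (Fin r) := fun j => univ.filter (fun i => j < i) with hsge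
  have hsplitprod : ∀ j ω, g univ ω
      = (∏ i ∈ univ.filter (· ≤ j), Real.exp (L * X i ω)) * g (sge j) ω := by
    intro j ω
    simp only [hg, hsge]
    rw [← Finset.prod_filter_mul_prod_filter_not univ (fun i => i ≤ j) (fun i => Real.exp (L * X i ω))]
    congr 1
    refine Finset.prod_congr ?_ fun _ _ => rfl
    apply Finset.filter_congr
    intro i _
    simp [not_le]
  have hexpT : ∀ j ω, (∏ i ∈ univ.filter (· ≤ j), Real.exp (L * X i ω))
      = Real.exp (L * T j ω) := by
    intro j ω
    rw [← Real.exp_sum, hTdef, Finset.mul_sum]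
  have hInd01 : ∀ (s : Set Ω) ω, Set.indicator s (fun _ => (1:ℝ)) ω ≤ 1 := by
    intro s ω
    by_cases h : ω ∈ s
    · rw [Set.indicator_of_mem h]
    · rw [Set.indicator_of_notMem h]; norm_num
  have hindint : ∀ j, ∫ ω, Set.indicator (B j) (fun _ => (1:ℝ)) ω * g (sge j) ω ∂P
      = (P (B j)).toReal * ∫ ω, g (sge j) ω ∂P := by
    intro j
    have hind : ProbabilityTheory.IndepFun
        (Set.indicator (B j) (fun _ => (1:ℝ))) (g (sge j)) P := by
      refine indepFun_of_blocks hmeas hindep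
        (S := {i : Fin r | i ≤ j}) (T := {i : Fin r | j < i}) ?_ ?_ ?_
      · rw [Set.disjoint_left]
        intro i hi hlt
        have h1 : i ≤ j := hi
        have h2 : j < i := hlt
        exact absurd h2 (not_lt.mpr h1)
      · exact measurable_const.indicator (hBmS j)
      · refine hgm _ _ ?_
        intro i hi
        simpa using (mem_filter.mp hi).2
    have := hind.integral_mul_eq_mul_integral
      (measurable_const.indicator (hBmeas j)).aestronglyMeasurable (hgmeas _).aestronglyMeasurable
    rw [show (Set.indicator (B j) (fun _ => (1:ℝ))) * g (sge j)
        = fun ω => Set.indicator (B j) (fun _ => (1:ℝ)) ω * g (sge j) ω from rfl] at this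
    rw [this]
    have hone : ∫ ω, Set.indicator (B j) (fun _ => (1:ℝ)) ω ∂P = (P (B j)).toReal :=
      integral_indicator_one (hBmeas j)
    rw [hone]
  have hintBg : ∀ j, Integrable
      (fun ω => Set.indicator (B j) (fun _ => (1:ℝ)) ω * g univ ω) P := by
    intro j
    refine Integrable.mono' (hgint univ)
      (((measurable_const.indicator (hBmeas j))).mul (hgmeas univ)).aestronglyMeasurable ?_
    filter_upwards with ω
    rw [Real.norm_of_nonneg (mul_nonneg (Set.indicator_nonneg (fun _ _ => zero_le_one) ω)
      (hgnonneg _ ω))]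
    calc Set.indicator (B j) (fun _ => (1:ℝ)) ω * g univ ω
        ≤ 1 * g univ ω := mul_le_mul_of_nonneg_right (hInd01 _ ω) (hgnonneg _ ω)
      _ = g univ ω := one_mul _
  have hstep : ∀ j, Real.exp (L * u) * (P (B j)).toReal
      ≤ ∫ ω, Set.indicator (B j) (fun _ => (1:ℝ)) ω * g univ ω ∂P := by
    intro j
    have h1le : (1:ℝ) ≤ ∫ ω, g (sge j) ω ∂P := by
      rw [hprod]
      calc (1:ℝ) = ∏ _i ∈ sge j, 1 := by simp
        _ ≤ ∏ i ∈ sge j, ∫ ω, Real.exp (L * X i ω) ∂P :=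
          Finset.prod_le_prod (fun _ _ => zero_le_one) (fun i _ => hIexp_ge i)
    have hPB0 : (0:ℝ) ≤ (P (B j)).toReal := ENNReal.toReal_nonneg
    calc Real.exp (L * u) * (P (B j)).toReal
        ≤ Real.exp (L * u) * ((P (B j)).toReal * ∫ ω, g (sge j) ω ∂P) :=
          mul_le_mul_of_nonneg_left (le_mul_of_one_le_right hPB0 h1le) (Real.exp_nonneg _)
      _ = ∫ ω, Real.exp (L * u) * (Set.indicator (B j) (fun _ => (1:ℝ)) ω * g (sge j) ω) ∂P := by
          rw [← hindint j, ← integral_const_mul]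
      _ ≤ ∫ ω, Set.indicator (B j) (fun _ => (1:ℝ)) ω * g univ ω ∂P := by
          refine integral_mono ?_ (hintBg j) ?_
          · refine Integrable.mono' ((hgint (sge j)).const_mul (Real.exp (L * u)))
              ((measurable_const.mul ((measurable_const.indicator (hBmeas j)).mul
                (hgmeas _)))).aestronglyMeasurable ?_
            filter_upwards with ω
            rw [Real.norm_of_nonneg (mul_nonneg (Real.exp_nonneg _)
              (mul_nonneg (Set.indicator_nonneg (fun _ _ => zero_le_one) ω) (hgnonneg _ ω)))]
            rcases Set.indicator_eq_zero_or_self (B j) (fun _ => (1:ℝ)) ω with h | h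
            all_goals rw [h]
            · simp [mul_nonneg (Real.exp_nonneg (L*u)) (hgnonneg (sge j) ω)]
            · simp
          · intro ω
            dsimp only
            by_cases hωB : ω ∈ B j
            · rw [Set.indicator_of_mem hωB, one_mul, one_mul, hsplitprod j ω, hexpT j ω]
              exact mul_le_mul_of_nonneg_right
                (Real.exp_le_exp.mpr (mul_le_mul_of_nonneg_left hωB.1 hL0)) (hgnonneg _ ω)
            · rw [Set.indicator_of_notMem hωB, zero_mul, mul_zero, zero_mul]
  -- global chain
  have hAmeas : MeasurableSet A := by
    have : A = ⋃ j, {ω | u ≤ T j ω} := by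
      ext ω; simp [hA]
    rw [this]
    exact MeasurableSet.iUnion fun j => measurableSet_le measurable_const (hTmeas j)
  have hintA : Integrable (fun ω => Set.indicator A (fun _ => (1:ℝ)) ω * g univ ω) P := by
    refine Integrable.mono' (hgint univ)
      (((measurable_const.indicator hAmeas)).mul (hgmeas univ)).aestronglyMeasurable ?_
    filter_upwards with ω
    rw [Real.norm_of_nonneg (mul_nonneg (Set.indicator_nonneg (fun _ _ => zero_le_one) ω)
      (hgnonneg _ ω))]
    calc Set.indicator A (fun _ => (1:ℝ)) ω * g univ ω
        ≤ 1 * g univ ω := mul_le_mul_of_nonneg_right (hInd01 _ ω) (hgnonneg _ ω)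
      _ = g univ ω := one_mul _
  have hchain : Real.exp (L * u) * (P A).toReal
      ≤ Real.exp (∑ i, p * (L * w i) ^ 2 / 2) := by
    calc Real.exp (L * u) * (P A).toReal
        = ∑ j, Real.exp (L * u) * (P (B j)).toReal := by
          rw [hPA, ENNReal.toReal_sum (fun j _ => measure_ne_top P _), Finset.mul_sum]
      _ ≤ ∑ j, ∫ ω, Set.indicator (B j) (fun _ => (1:ℝ)) ω * g univ ω ∂P :=
          Finset.sum_le_sum fun j _ => hstep j
      _ = ∫ ω, ∑ j, Set.indicator (B j) (fun _ => (1:ℝ)) ω * g univ ω ∂P :=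
          (integral_finset_sum _ fun j _ => hintBg j).symm
      _ = ∫ ω, Set.indicator A (fun _ => (1:ℝ)) ω * g univ ω ∂P := by
          congr 1
          funext ω
          rw [← Finset.sum_mul, hindsum ω]
      _ ≤ ∫ ω, g univ ω ∂P := by
          refine integral_mono hintA (hgint univ) ?_
          intro ω
          dsimp only
          calc Set.indicator A (fun _ => (1:ℝ)) ω * g univ ω
              ≤ 1 * g univ ω := mul_le_mul_of_nonneg_right (hInd01 _ ω) (hgnonneg _ ω)
            _ = g univ ω := one_mul _
      _ = ∏ i, ∫ ω, Real.exp (L * X i ω) ∂P := hprod univ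
      _ ≤ ∏ i, Real.exp (p * (L * w i) ^ 2 / 2) :=
          Finset.prod_le_prod (fun i _ => le_trans zero_le_one (hIexp_ge i))
            (fun i _ => hIexp_le i)
      _ = Real.exp (∑ i, p * (L * w i) ^ 2 / 2) := (Real.exp_sum _ _).symm
  have hsum_le : (∑ i, p * (L * w i) ^ 2 / 2) ≤ L ^ 2 * K / 2 := by
    have h1 : ∀ i : Fin r, p * (L * w i) ^ 2 / 2 ≤ L ^ 2 / 2 * p * (cmax : ℝ) * w i := by
      intro i
      nlinarith [mul_nonneg (mul_nonneg (sq_nonneg L) hp0) (hwpos i).le, hwle i,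
        (hwpos i).le, sq_nonneg L, hp0]
    calc (∑ i, p * (L * w i) ^ 2 / 2)
        ≤ ∑ i, L ^ 2 / 2 * p * (cmax : ℝ) * w i := Finset.sum_le_sum fun i _ => h1 i
      _ = L ^ 2 / 2 * p * (cmax : ℝ) * ∑ i, w i := by rw [← Finset.mul_sum]
      _ = L ^ 2 * K / 2 := by rw [hK, hμtot]; ring
  have hfinal : (P A).toReal ≤ Real.exp (-(u ^ 2) / (2 * K)) := by
    have h2 : Real.exp (L * u) * (P A).toReal ≤ Real.exp (L ^ 2 * K / 2) :=
      hchain.trans (Real.exp_le_exp.mpr hsum_le)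
    have h3 : (P A).toReal ≤ Real.exp (L ^ 2 * K / 2) / Real.exp (L * u) := by
      rw [le_div_iff₀ (Real.exp_pos _)]
      linarith [h2, mul_comm ((P A).toReal) (Real.exp (L * u))]
    rw [← Real.exp_sub] at h3
    have harg : L ^ 2 * K / 2 - L * u = -(u ^ 2) / (2 * K) := by
      rw [hL]
      field_simp
      ring
    rwa [harg] at h3
  -- identify the event set and conclude
  have hTrw : ∀ (j : Fin r) ω, p * (∑ i ∈ univ.filter (· ≤ j), w i)
      - (∑ i ∈ univ.filter (· ≤ j), w i * Z i ω) = T j ω := by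
    intro j ω
    simp only [hTdef, hXdef]
    rw [Finset.sum_sub_distrib, Finset.mul_sum]
  have hsetA : {ω | ∃ j : Fin r,
      u ≤ p * (∑ i ∈ Finset.univ.filter (· ≤ j), w i)
            - (∑ i ∈ Finset.univ.filter (· ≤ j), w i * Z i ω)} = A := by
    ext ω
    simp only [Set.mem_setOf_eq, hA]
    constructor
    · rintro ⟨j, hj⟩
      exact ⟨j, by rwa [hTrw j ω] at hj⟩
    · rintro ⟨j, hj⟩
      exact ⟨j, by rwa [hTrw j ω]⟩
  rw [hsetA, ← ENNReal.ofReal_toReal (measure_ne_top P A)]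
  apply ENNReal.ofReal_le_ofReal
  refine hfinal.trans (le_of_eq ?_)
  congr 1
  rw [hK]
  ring
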